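/- Suppose A ∈ ℂ^{m×N} satisfies the ℓ^q-robust null space property of order s with constants 0 < ρ < 1 and τ > 0 relative to the rescaled norm s^(1/q−1/2)‖·‖ on ℂ^m. Then the pair (A, Δ_η) with Δ_η the quadratically-constrained basis pursuit decoder is η-robustly mixed (ℓ^p, ℓ^1)-instance optimal of order s for every 1 ≤ p ≤ q, with constants C = 2(1+ρ)²/(1−ρ) and D = 2(3+ρ)τ/(1−ρ): for all x ∈ ℂ^N and all e with ‖e‖ ≤ η, every minimizer x̂ ∈ Δ_η(Ax + e) satisfies ‖x − x̂‖_p ≤ C s^(1/p−1) σ_s(x)_1 + D s^(1/p−1/2) η. -/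

import Mathlib

noncomputable def lpNorm {n : ℕ} (p : ℝ) (x : Fin n → ℂ) : ℝ :=
  (∑ i, ‖x i‖ ^ p) ^ (1 / p)

/-- Best `s`-term approximation error of `x` in the `ℓ^1` norm. -/
noncomputable def bestApprox1 {n : ℕ} (s : ℕ) (x : Fin n → ℂ) : ℝ :=
  sInf ((fun w => lpNorm 1 (x - w)) ''
    {w : Fin n → ℂ | ∃ S : Finset (Fin n), S.card ≤ s ∧ ∀ i ∉ S, w i = 0})

/-- Restriction of `z` to the coordinates in `S` (zero elsewhere). -/
def restrictTo {n : ℕ} (S : Finset (Fin n)) (z : Fin n → ℂ) : Fin n → ℂ :=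
  fun i => if i ∈ S then z i else 0

open Finset

section aux
variable {n : ℕ}

lemma sum_rpow_nonneg (p : ℝ) (x : Fin n → ℂ) : 0 ≤ ∑ i, ‖x i‖ ^ p :=
  Finset.sum_nonneg fun i _ => Real.rpow_nonneg (norm_nonneg _) _

lemma lpNorm_nonneg (p : ℝ) (x : Fin n → ℂ) : 0 ≤ lpNorm p x :=
  Real.rpow_nonneg (sum_rpow_nonneg p x) _

lemma lpNorm_one_eq (x : Fin n → ℂ) : lpNorm 1 x = ∑ i, ‖x i‖ := by
  simp [lpNorm]

lemma lpNorm_one_restrict (S : Finset (Fin n)) (x : Fin n → ℂ) :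
    lpNorm 1 (restrictTo S x) = ∑ i ∈ S, ‖x i‖ := by
  rw [lpNorm_one_eq]
  have : ∀ i, ‖restrictTo S x i‖ = if i ∈ S then ‖x i‖ else 0 := by
    intro i; by_cases h : i ∈ S <;> simp [restrictTo, h]
  simp_rw [this, Finset.sum_ite_mem, Finset.univ_inter]

lemma lpNorm_restrict {p : ℝ} (hp : 0 < p) (S : Finset (Fin n)) (x : Fin n → ℂ) :
    lpNorm p (restrictTo S x) = (∑ i ∈ S, ‖x i‖ ^ p) ^ (1 / p) := by
  unfold lpNorm
  congr 1
  have : ∀ i, ‖restrictTo S x i‖ ^ p = if i ∈ S then ‖x i‖ ^ p else 0 := by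
    intro i; by_cases h : i ∈ S <;> simp [restrictTo, h, Real.zero_rpow hp.ne']
  simp_rw [this, Finset.sum_ite_mem, Finset.univ_inter]

lemma restrict_add_compl (S : Finset (Fin n)) (x : Fin n → ℂ) :
    restrictTo S x + restrictTo Sᶜ x = x := by
  funext i; by_cases h : i ∈ S <;> simp [restrictTo, h]

lemma lpNorm_add_le {p : ℝ} (hp : 1 ≤ p) (a b : Fin n → ℂ) :
    lpNorm p (a + b) ≤ lpNorm p a + lpNorm p b := by
  have hp0 : (0:ℝ) < p := lt_of_lt_of_le one_pos hp
  have h1 : ∑ i, ‖(a + b) i‖ ^ p ≤ ∑ i, (‖a i‖ + ‖b i‖) ^ p :=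
    Finset.sum_le_sum fun i _ =>
      Real.rpow_le_rpow (norm_nonneg _) (norm_add_le _ _) hp0.le
  have h2 := Real.Lp_add_le_of_nonneg (s := Finset.univ) (f := fun i => ‖a i‖)
    (g := fun i => ‖b i‖) hp (fun i _ => norm_nonneg _) (fun i _ => norm_nonneg _)
  calc lpNorm p (a + b) = (∑ i, ‖(a + b) i‖ ^ p) ^ (1 / p) := rfl
    _ ≤ (∑ i, (‖a i‖ + ‖b i‖) ^ p) ^ (1 / p) :=
        Real.rpow_le_rpow (sum_rpow_nonneg p _) h1 (by positivity)
    _ ≤ lpNorm p a + lpNorm p b := h2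

lemma lpNorm_embed {p q : ℝ} (hp : 1 ≤ p) (hq : p ≤ q) {s : ℕ} (hs : 1 ≤ s)
    (S : Finset (Fin n)) (hS : S.card ≤ s) (z : Fin n → ℂ) :
    lpNorm p (restrictTo S z) ≤ (s : ℝ) ^ (1 / p - 1 / q) * lpNorm q (restrictTo S z) := by
  have hp0 : (0:ℝ) < p := lt_of_lt_of_le one_pos hp
  have hq0 : (0:ℝ) < q := lt_of_lt_of_le (lt_of_lt_of_le one_pos hp) hq
  have hqp : 1 ≤ q / p := (one_le_div hp0).2 hq
  set u : Fin n → ℝ := fun i => ‖z i‖ with hu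
  have hun : ∀ i, 0 ≤ u i := fun i => norm_nonneg _
  have key := Real.rpow_sum_le_const_mul_sum_rpow_of_nonneg (s := S)
    (f := fun i => u i ^ p) hqp (fun i _ => Real.rpow_nonneg (hun i) _)
  have hsum : ∀ i ∈ S, (u i ^ p) ^ (q / p) = u i ^ q := by
    intro i _
    rw [← Real.rpow_mul (hun i)]
    congr 1; field_simp
  rw [Finset.sum_congr rfl hsum] at key
  -- key : (∑ i in S, u i ^ p) ^ (q/p) ≤ (S.card : ℝ) ^ (q/p - 1) * ∑ i in S, u i ^ q
  have hA : (0:ℝ) ≤ ∑ i ∈ S, u i ^ p :=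
    Finset.sum_nonneg fun i _ => Real.rpow_nonneg (hun i) _
  have hB : (0:ℝ) ≤ ∑ i ∈ S, u i ^ q :=
    Finset.sum_nonneg fun i _ => Real.rpow_nonneg (hun i) _
  have h2 : ∑ i ∈ S, u i ^ p ≤ ((S.card : ℝ) ^ (q / p - 1) * ∑ i ∈ S, u i ^ q) ^ (p / q) := by
    have := Real.rpow_le_rpow (Real.rpow_nonneg hA _) key (le_of_lt (div_pos hp0 hq0))
    rwa [← Real.rpow_mul hA, div_mul_div_comm, mul_comm q p, div_self (by positivity),
      Real.rpow_one] at this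
  have hcard : ((S.card : ℝ)) ^ (q / p - 1) ≤ (s : ℝ) ^ (q / p - 1) :=
    Real.rpow_le_rpow (Nat.cast_nonneg _) (by exact_mod_cast hS) (by linarith)
  have h3 : ∑ i ∈ S, u i ^ p ≤ ((s : ℝ) ^ (q / p - 1) * ∑ i ∈ S, u i ^ q) ^ (p / q) := by
    refine h2.trans (Real.rpow_le_rpow (by positivity) ?_ (le_of_lt (div_pos hp0 hq0)))
    exact mul_le_mul_of_nonneg_right hcard hB
  rw [lpNorm_restrict hp0, lpNorm_restrict hq0]
  calc (∑ i ∈ S, u i ^ p) ^ (1 / p)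
      ≤ (((s : ℝ) ^ (q / p - 1) * ∑ i ∈ S, u i ^ q) ^ (p / q)) ^ (1 / p) :=
        Real.rpow_le_rpow hA h3 (by positivity)
    _ = (s : ℝ) ^ (1 / p - 1 / q) * (∑ i ∈ S, u i ^ q) ^ (1 / q) := by
        rw [← Real.rpow_mul (by positivity), Real.mul_rpow (by positivity) hB,
          ← Real.rpow_mul (Nat.cast_nonneg _)]
        have e1 : (q / p - 1) * (p / q * (1 / p)) = 1 / p - 1 / q := by
          field_simp
        have e2 : p / q * (1 / p) = 1 / q := by field_simp
        rw [e1, e2]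

end aux

section more
variable {n : ℕ}

lemma stechkin_aux {p : ℝ} (hp : 1 ≤ p) {s : ℕ} (hs : 1 ≤ s) (v : Fin n → ℂ)
    (T : Finset (Fin n)) (hT : ∀ i ∉ T, (s : ℝ) * ‖v i‖ ≤ ∑ j, ‖v j‖) :
    lpNorm p (restrictTo Tᶜ v) ≤ (s : ℝ) ^ (1 / p - 1) * ∑ j, ‖v j‖ := by
  have hp0 : (0:ℝ) < p := lt_of_lt_of_le one_pos hp
  have hs0 : (0:ℝ) < s := by exact_mod_cast hs
  set L : ℝ := ∑ j, ‖v j‖ with hL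
  have hL0 : 0 ≤ L := Finset.sum_nonneg fun j _ => norm_nonneg _
  set M : ℝ := L / s with hM
  have hM0 : 0 ≤ M := div_nonneg hL0 hs0.le
  have hTM : ∀ i ∈ Tᶜ, ‖v i‖ ≤ M := by
    intro i hi
    rw [Finset.mem_compl] at hi
    rw [hM, le_div_iff₀ hs0, mul_comm]
    exact hT i hi
  have hsum : ∑ i ∈ Tᶜ, ‖v i‖ ^ p ≤ M ^ (p - 1) * L := by
    have h1 : ∑ i ∈ Tᶜ, ‖v i‖ ^ p ≤ ∑ i ∈ Tᶜ, M ^ (p - 1) * ‖v i‖ := by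
      refine Finset.sum_le_sum fun i hi => ?_
      rcases eq_or_lt_of_le (norm_nonneg (v i)) with h0 | h0
      · rw [← h0, Real.zero_rpow hp0.ne', mul_zero]
      · calc ‖v i‖ ^ p = ‖v i‖ ^ (p - 1) * ‖v i‖ := by
              have e : ‖v i‖ ^ (p - 1 + 1) = ‖v i‖ ^ (p - 1) * ‖v i‖ ^ (1:ℝ) :=
                Real.rpow_add h0 _ _
              rw [Real.rpow_one] at e
              have hpe : p - 1 + 1 = p := by ring
              rw [hpe] at e
              exact e
          _ ≤ M ^ (p - 1) * ‖v i‖ := by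
              apply mul_le_mul_of_nonneg_right _ (norm_nonneg _)
              exact Real.rpow_le_rpow (norm_nonneg _) (hTM i hi) (by linarith)
    rw [← Finset.mul_sum] at h1
    refine h1.trans (mul_le_mul_of_nonneg_left ?_ (Real.rpow_nonneg hM0 _))
    calc ∑ i ∈ Tᶜ, ‖v i‖ ≤ ∑ i, ‖v i‖ :=
          Finset.sum_le_sum_of_subset_of_nonneg (Finset.subset_univ _)
            (fun i _ _ => norm_nonneg _)
      _ = L := rfl
  rw [lpNorm_restrict hp0]
  calc (∑ i ∈ Tᶜ, ‖v i‖ ^ p) ^ (1 / p) ≤ (M ^ (p - 1) * L) ^ (1 / p) :=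
        Real.rpow_le_rpow (Finset.sum_nonneg fun i _ => Real.rpow_nonneg (norm_nonneg _) _)
          hsum (by positivity)
    _ ≤ (s : ℝ) ^ (1 / p - 1) * L := by
        rcases eq_or_lt_of_le hL0 with h0 | h0
        · rw [← h0]
          have : M = 0 := by rw [hM, ← h0]; simp
          rw [this, mul_zero, Real.zero_rpow (by positivity : 1 / p ≠ 0), mul_zero]
        · have : M ^ (p - 1) * L = L ^ p / (s : ℝ) ^ (p - 1) := by
            rw [hM, Real.div_rpow hL0 hs0.le, div_mul_eq_mul_div]
            congr 1
            have e : L ^ (p - 1 + 1) = L ^ (p - 1) * L ^ (1:ℝ) := Real.rpow_add h0 _ _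
            rw [Real.rpow_one] at e
            have hpe : p - 1 + 1 = p := by ring
            rw [hpe] at e
            exact e.symm
          rw [this, Real.div_rpow (Real.rpow_nonneg hL0 _) (Real.rpow_nonneg hs0.le _),
            ← Real.rpow_mul hL0, ← Real.rpow_mul hs0.le,
            mul_one_div p p, div_self hp0.ne', Real.rpow_one]
          rw [div_eq_mul_inv, ← Real.rpow_neg hs0.le, mul_comm]
          have : -((p - 1) * (1 / p)) = 1 / p - 1 := by field_simp; ring
          rw [this]

lemma exists_top_set (s : ℕ) (v : Fin n → ℂ) :
    ∃ T : Finset (Fin n), T.card ≤ s ∧ (∀ i ∉ T, (s : ℝ) * ‖v i‖ ≤ ∑ j, ‖v j‖) ∧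
      (∀ S' : Finset (Fin n), S'.card ≤ s → ∑ i ∈ S', ‖v i‖ ≤ ∑ i ∈ T, ‖v i‖) := by
  classical
  set C : Finset (Finset (Fin n)) := Finset.univ.filter (fun S => S.card ≤ s) with hC
  have hCne : C.Nonempty := ⟨∅, by simp [hC]⟩
  obtain ⟨T, hTC, hTmax⟩ := Finset.exists_max_image C (fun S => ∑ i ∈ S, ‖v i‖) hCne
  have hTcard : T.card ≤ s := by simpa [hC] using hTC
  refine ⟨T, hTcard, ?_, fun S' hS' => hTmax S' (by simp [hC, hS'])⟩
  intro i hi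
  have hle : ∀ j ∈ T, ‖v i‖ ≤ ‖v j‖ := by
    intro j hj
    by_contra hlt
    push_neg at hlt
    have hmem : i ∉ T.erase j := fun h => hi (Finset.mem_of_mem_erase h)
    have hcard : (insert i (T.erase j)).card ≤ s := by
      rw [Finset.card_insert_of_notMem hmem, Finset.card_erase_of_mem hj]
      have h1T : 1 ≤ T.card := Finset.card_pos.2 ⟨j, hj⟩
      omega
    have h2 : insert i (T.erase j) ∈ C := by
      rw [hC, Finset.mem_filter]
      exact ⟨Finset.mem_univ _, hcard⟩
    have := hTmax _ h2
    rw [Finset.sum_insert hmem, Finset.sum_erase_eq_sub hj] at this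
    linarith
  rcases lt_or_ge T.card s with hlt | hge
  · -- can insert i : then ‖v i‖ = 0
    have hmem : i ∉ T := hi
    have hcard : (insert i T).card ≤ s := by
      rw [Finset.card_insert_of_notMem hmem]; omega
    have h2 : insert i T ∈ C := by
      rw [hC, Finset.mem_filter]
      exact ⟨Finset.mem_univ _, hcard⟩
    have := hTmax _ h2
    rw [Finset.sum_insert hmem] at this
    have hvi : ‖v i‖ ≤ 0 := by linarith
    have : ‖v i‖ = 0 := le_antisymm hvi (norm_nonneg _)
    rw [this, mul_zero]
    exact Finset.sum_nonneg fun j _ => norm_nonneg _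
  · have hTs : T.card = s := le_antisymm hTcard hge
    have h1 : (T.card : ℝ) * ‖v i‖ ≤ ∑ j ∈ T, ‖v j‖ := by
      have := Finset.card_nsmul_le_sum T (fun j => ‖v j‖) (‖v i‖) hle
      simpa [nsmul_eq_mul] using this
    rw [hTs] at h1
    refine h1.trans (Finset.sum_le_sum_of_subset_of_nonneg (Finset.subset_univ _)
      (fun j _ _ => norm_nonneg _))

lemma bestApprox1_ge (s : ℕ) (x : Fin n → ℂ) (T : Finset (Fin n))
    (hmax : ∀ S' : Finset (Fin n), S'.card ≤ s → ∑ i ∈ S', ‖x i‖ ≤ ∑ i ∈ T, ‖x i‖) :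
    ∑ i ∈ Tᶜ, ‖x i‖ ≤ bestApprox1 s x := by
  apply le_csInf
  · exact ⟨lpNorm 1 (x - 0), ⟨0, ⟨∅, by simp, fun i _ => rfl⟩, rfl⟩⟩
  · rintro b ⟨w, ⟨S, hScard, hw⟩, rfl⟩
    have h1 : ∑ i ∈ Tᶜ, ‖x i‖ ≤ ∑ i ∈ Sᶜ, ‖x i‖ := by
      have hsplitT := Finset.sum_add_sum_compl T (fun i => ‖x i‖)
      have hsplitS := Finset.sum_add_sum_compl S (fun i => ‖x i‖)
      have := hmax S hScard
      linarith
    have h2 : ∑ i ∈ Sᶜ, ‖x i‖ ≤ lpNorm 1 (x - w) := by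
      rw [lpNorm_one_eq]
      calc ∑ i ∈ Sᶜ, ‖x i‖ = ∑ i ∈ Sᶜ, ‖(x - w) i‖ := by
            refine Finset.sum_congr rfl fun i hi => ?_
            rw [Finset.mem_compl] at hi
            simp [hw i hi]
        _ ≤ ∑ i, ‖(x - w) i‖ :=
            Finset.sum_le_sum_of_subset_of_nonneg (Finset.subset_univ _)
              (fun i _ _ => norm_nonneg _)
    linarith

end more

/-- `ℓ^q`-robust null space property of order `s` with constants `ρ, τ` relative to the
norm `nu` on `ℂ^m`. -/
def RNSP {m N : ℕ} (A : Matrix (Fin m) (Fin N) ℂ) (nu : (Fin m → ℂ) → ℝ)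
    (q : ℝ) (s : ℕ) (ρ τ : ℝ) : Prop :=
  ∀ S : Finset (Fin N), S.card ≤ s → ∀ z : Fin N → ℂ,
    lpNorm q (restrictTo S z) ≤
      (s : ℝ) ^ (1 / q - 1) * ρ * lpNorm 1 (restrictTo Sᶜ z) + τ * nu (A.mulVec z)

/-- The quadratically-constrained basis pursuit decoder: the set of `ℓ^1`-minimizers
among the feasible vectors `{z : nn(Az − y) ≤ η}`. -/
def qcbp {m N : ℕ} (A : Matrix (Fin m) (Fin N) ℂ) (nn : (Fin m → ℂ) → ℝ)
    (η : ℝ) (y : Fin m → ℂ) : Set (Fin N → ℂ) :=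
  {z | nn (A.mulVec z - y) ≤ η ∧
    ∀ w : Fin N → ℂ, nn (A.mulVec w - y) ≤ η → lpNorm 1 z ≤ lpNorm 1 w}

/-- Robust null space property ⟹ robust instance optimality of QCBP: if `A` satisfies
the `ℓ^q`-RNSP of order `s` with constants `ρ, τ` relative to `s^(1/q−1/2)‖·‖`, then for
all `1 ≤ p ≤ q`, all `x` and all `e` with `‖e‖ ≤ η`, every minimizer
`x̂ ∈ Δ_η(Ax + e)` satisfies
`‖x − x̂‖_p ≤ C s^(1/p−1) σ_s(x)₁ + D s^(1/p−1/2) η` with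
`C = 2(1+ρ)²/(1−ρ)` and `D = 2(3+ρ)τ/(1−ρ)`. -/
theorem stmt18 {m N : ℕ} (A : Matrix (Fin m) (Fin N) ℂ)
    (nn : (Fin m → ℂ) → ℝ)
    (nn_add : ∀ x y, nn (x + y) ≤ nn x + nn y)
    (nn_smul : ∀ (c : ℂ) x, nn (c • x) = ‖c‖ * nn x)
    (nn_eq_zero : ∀ x, nn x = 0 ↔ x = 0)
    (q : ℝ) (hq : 1 ≤ q) (s : ℕ) (hs : 1 ≤ s)
    (ρ τ : ℝ) (hρ0 : 0 < ρ) (hρ1 : ρ < 1) (hτ : 0 < τ)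
    (hNSP : RNSP A (fun v => (s : ℝ) ^ ((1 : ℝ) / q - 1 / 2) * nn v) q s ρ τ)
    (η : ℝ) (hη : 0 ≤ η) (p : ℝ) (hp1 : 1 ≤ p) (hpq : p ≤ q)
    (x : Fin N → ℂ) (e : Fin m → ℂ) (he : nn e ≤ η)
    (xh : Fin N → ℂ) (hxh : xh ∈ qcbp A nn η (A.mulVec x + e)) :
    lpNorm p (x - xh) ≤
      2 * (1 + ρ) ^ 2 / (1 - ρ) * (s : ℝ) ^ ((1 : ℝ) / p - 1) * bestApprox1 s x
      + 2 * (3 + ρ) * τ / (1 - ρ) * (s : ℝ) ^ ((1 : ℝ) / p - 1 / 2) * η := by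
  obtain ⟨hfeas, hmin⟩ := hxh
  have h1ρ : (0:ℝ) < 1 - ρ := by linarith
  have honep : (0:ℝ) ≤ 1 + ρ := by linarith
  have hsR : (1:ℝ) ≤ (s:ℝ) := by exact_mod_cast hs
  have hs0 : (0:ℝ) < (s:ℝ) := by linarith
  have hp0 : (0:ℝ) < p := lt_of_lt_of_le one_pos hp1
  have hq0 : (0:ℝ) < q := lt_of_lt_of_le one_pos hq
  set K1 := (s:ℝ) ^ ((1:ℝ)/p - 1) with hK1
  set K2 := (s:ℝ) ^ ((1:ℝ)/p - 1/2) with hK2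
  set S12 := (s:ℝ) ^ ((1:ℝ)/2) with hS12
  have hK1nn : 0 ≤ K1 := Real.rpow_nonneg hs0.le _
  have hK2nn : 0 ≤ K2 := Real.rpow_nonneg hs0.le _
  have hK12 : K1 * S12 = K2 := by
    rw [hK1, hS12, hK2, ← Real.rpow_add hs0]
    congr 1; ring
  set y := A.mulVec x + e with hy
  -- x is feasible
  have hxfeas : nn (A.mulVec x - y) ≤ η := by
    have hxy : A.mulVec x - y = (-1 : ℂ) • e := by
      funext i
      simp only [hy, Pi.sub_apply, Pi.add_apply, Pi.smul_apply, smul_eq_mul]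
      ring
    rw [hxy, nn_smul]
    simpa using he
  have hl1 : lpNorm 1 xh ≤ lpNorm 1 x := hmin x hxfeas
  rw [lpNorm_one_eq, lpNorm_one_eq] at hl1
  set v := x - xh with hv
  have hAveq : A.mulVec v = (-1:ℂ) • e + (-1:ℂ) • (A.mulVec xh - y) := by
    rw [hv, Matrix.mulVec_sub]
    funext i
    simp only [hy, Pi.sub_apply, Pi.add_apply, Pi.smul_apply, smul_eq_mul]
    ring
  have hnn0 : ∀ w : Fin m → ℂ, 0 ≤ nn w := by
    intro w
    have h0 : nn (0 : Fin m → ℂ) = 0 := (nn_eq_zero 0).2 rfl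
    have hneg : nn ((-1:ℂ) • w) = nn w := by rw [nn_smul]; simp
    have hadd := nn_add w ((-1:ℂ) • w)
    have hzero : w + (-1:ℂ) • w = 0 := by funext i; simp
    rw [hzero, h0, hneg] at hadd
    linarith
  have hε2 : nn (A.mulVec v) ≤ 2 * η := by
    rw [hAveq]
    calc nn ((-1:ℂ) • e + (-1:ℂ) • (A.mulVec xh - y))
        ≤ nn ((-1:ℂ) • e) + nn ((-1:ℂ) • (A.mulVec xh - y)) := nn_add _ _
      _ = nn e + nn (A.mulVec xh - y) := by rw [nn_smul, nn_smul]; simp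
      _ ≤ η + η := add_le_add he hfeas
      _ = 2 * η := by ring
  have hε0 : 0 ≤ nn (A.mulVec v) := hnn0 _
  set L := ∑ i, ‖v i‖ with hLdef
  set σ := bestApprox1 s x with hσ
  -- Step A : near-optimal support for x
  obtain ⟨S0, hS0card, _, hS0max⟩ := exists_top_set s x
  have hσ0 : ∑ i ∈ S0ᶜ, ‖x i‖ ≤ σ := bestApprox1_ge s x S0 hS0max
  set a := ∑ i ∈ S0, ‖v i‖ with ha
  set b := ∑ i ∈ S0ᶜ, ‖v i‖ with hb
  -- Step B : the ℓ¹ bound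
  have hkey1 : a ≤ ρ * b + τ * S12 * nn (A.mulVec v) := by
    have hemb := lpNorm_embed (le_refl (1:ℝ)) hq hs S0 hS0card v
    rw [lpNorm_one_restrict] at hemb
    have hns := hNSP S0 hS0card v
    rw [lpNorm_one_restrict] at hns
    have e1 : (s:ℝ) ^ ((1:ℝ)/1 - 1/q) * (s:ℝ) ^ ((1:ℝ)/q - 1) = 1 := by
      rw [← Real.rpow_add hs0]
      have he0 : (1:ℝ)/1 - 1/q + ((1:ℝ)/q - 1) = 0 := by ring
      rw [he0, Real.rpow_zero]
    have e2 : (s:ℝ) ^ ((1:ℝ)/1 - 1/q) * (s:ℝ) ^ ((1:ℝ)/q - 1/2) = S12 := by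
      rw [hS12, ← Real.rpow_add hs0]
      congr 1; ring
    calc a ≤ (s:ℝ) ^ ((1:ℝ)/1 - 1/q) * lpNorm q (restrictTo S0 v) := hemb
      _ ≤ (s:ℝ) ^ ((1:ℝ)/1 - 1/q) *
            ((s:ℝ) ^ (1/q - 1) * ρ * b + τ * ((s:ℝ) ^ ((1:ℝ)/q - 1/2) * nn (A.mulVec v))) :=
          mul_le_mul_of_nonneg_left hns (Real.rpow_nonneg hs0.le _)
      _ = ((s:ℝ) ^ ((1:ℝ)/1 - 1/q) * (s:ℝ) ^ ((1:ℝ)/q - 1)) * ρ * b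
            + τ * (((s:ℝ) ^ ((1:ℝ)/1 - 1/q) * (s:ℝ) ^ ((1:ℝ)/q - 1/2)) * nn (A.mulVec v)) := by
          ring_nf
      _ = ρ * b + τ * S12 * nn (A.mulVec v) := by rw [e1, e2]; ring
  have hcone : b ≤ a + 2 * σ := by
    have t1 : ∑ i ∈ S0, ‖x i‖ ≤ ∑ i ∈ S0, ‖xh i‖ + a := by
      rw [ha, ← Finset.sum_add_distrib]
      refine Finset.sum_le_sum fun i _ => ?_
      have hxi : x i = xh i + v i := by rw [hv]; simp only [Pi.sub_apply]; ring
      calc ‖x i‖ = ‖xh i + v i‖ := by rw [← hxi]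
        _ ≤ ‖xh i‖ + ‖v i‖ := norm_add_le _ _
    have t2 : b ≤ ∑ i ∈ S0ᶜ, ‖x i‖ + ∑ i ∈ S0ᶜ, ‖xh i‖ := by
      rw [hb, ← Finset.sum_add_distrib]
      refine Finset.sum_le_sum fun i _ => ?_
      have hvi : v i = x i - xh i := by rw [hv]; simp only [Pi.sub_apply]
      rw [hvi]
      exact norm_sub_le _ _
    have hx_split := Finset.sum_add_sum_compl S0 (fun i => ‖x i‖)
    have hxh_split := Finset.sum_add_sum_compl S0 (fun i => ‖xh i‖)
    linarith
  have hbb : (1 - ρ) * b ≤ 2 * σ + τ * S12 * nn (A.mulVec v) := by nlinarith [hkey1, hcone]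
  have hLab : L = a + b := (Finset.sum_add_sum_compl S0 _).symm
  have hL1 : (1 - ρ) * L ≤ 2 * (1 + ρ) * σ + 2 * τ * S12 * nn (A.mulVec v) := by
    have hA := mul_le_mul_of_nonneg_left hbb honep
    have hB := mul_le_mul_of_nonneg_left hkey1 h1ρ.le
    nlinarith [hA, hB]
  -- Step C : the ℓᵖ bound
  obtain ⟨T, hTcard, hT2, -⟩ := exists_top_set s v
  have hc1 : lpNorm p v ≤ (1 + ρ) * K1 * L + τ * K2 * nn (A.mulVec v) := by
    have hsplit : lpNorm p v ≤ lpNorm p (restrictTo T v) + lpNorm p (restrictTo Tᶜ v) := by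
      conv_lhs => rw [← restrict_add_compl T v]
      exact lpNorm_add_le hp1 _ _
    have hP2 : lpNorm p (restrictTo Tᶜ v) ≤ K1 * L := stechkin_aux hp1 hs v T hT2
    have hP1 : lpNorm p (restrictTo T v) ≤ ρ * K1 * L + τ * K2 * nn (A.mulVec v) := by
      have hemb := lpNorm_embed hp1 hpq hs T hTcard v
      have hns := hNSP T hTcard v
      rw [lpNorm_one_restrict] at hns
      have hble : ∑ i ∈ Tᶜ, ‖v i‖ ≤ L :=
        Finset.sum_le_sum_of_subset_of_nonneg (Finset.subset_univ _)
          (fun i _ _ => norm_nonneg _)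
      have hmul := mul_le_mul_of_nonneg_left hble
        (mul_nonneg (Real.rpow_nonneg hs0.le ((1:ℝ)/q - 1)) hρ0.le)
      have h2 : lpNorm q (restrictTo T v) ≤
          (s:ℝ) ^ ((1:ℝ)/q - 1) * ρ * L + τ * ((s:ℝ) ^ ((1:ℝ)/q - 1/2) * nn (A.mulVec v)) := by
        refine hns.trans ?_
        have : (s:ℝ) ^ ((1:ℝ)/q - 1) * ρ * (∑ i ∈ Tᶜ, ‖v i‖) ≤ (s:ℝ) ^ ((1:ℝ)/q - 1) * ρ * L := by
          rw [mul_assoc, mul_assoc]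
          exact mul_le_mul_of_nonneg_left (mul_le_mul_of_nonneg_left hble hρ0.le)
            (Real.rpow_nonneg hs0.le _)
        linarith
      have f1 : (s:ℝ) ^ ((1:ℝ)/p - 1/q) * (s:ℝ) ^ ((1:ℝ)/q - 1) = K1 := by
        rw [hK1, ← Real.rpow_add hs0]
        congr 1; ring
      have f2 : (s:ℝ) ^ ((1:ℝ)/p - 1/q) * (s:ℝ) ^ ((1:ℝ)/q - 1/2) = K2 := by
        rw [hK2, ← Real.rpow_add hs0]
        congr 1; ring
      calc lpNorm p (restrictTo T v)
          ≤ (s:ℝ) ^ ((1:ℝ)/p - 1/q) * lpNorm q (restrictTo T v) := hemb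
        _ ≤ (s:ℝ) ^ ((1:ℝ)/p - 1/q) *
              ((s:ℝ) ^ ((1:ℝ)/q - 1) * ρ * L + τ * ((s:ℝ) ^ ((1:ℝ)/q - 1/2) * nn (A.mulVec v))) :=
            mul_le_mul_of_nonneg_left h2 (Real.rpow_nonneg hs0.le _)
        _ = ((s:ℝ) ^ ((1:ℝ)/p - 1/q) * (s:ℝ) ^ ((1:ℝ)/q - 1)) * ρ * L
              + τ * (((s:ℝ) ^ ((1:ℝ)/p - 1/q) * (s:ℝ) ^ ((1:ℝ)/q - 1/2)) * nn (A.mulVec v)) := by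
            ring
        _ = ρ * K1 * L + τ * K2 * nn (A.mulVec v) := by rw [f1, f2]; ring
    linarith
  -- Final combination
  have hfinal : (1 - ρ) * lpNorm p v ≤ 2 * (1 + ρ)^2 * K1 * σ + 2 * (3 + ρ) * τ * K2 * η := by
    calc (1 - ρ) * lpNorm p v
        ≤ (1 - ρ) * ((1 + ρ) * K1 * L + τ * K2 * nn (A.mulVec v)) :=
          mul_le_mul_of_nonneg_left hc1 h1ρ.le
      _ = ((1 + ρ) * K1) * ((1 - ρ) * L) + (1 - ρ) * (τ * K2 * nn (A.mulVec v)) := by ring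
      _ ≤ ((1 + ρ) * K1) * (2 * (1 + ρ) * σ + 2 * τ * S12 * nn (A.mulVec v))
            + (1 - ρ) * (τ * K2 * nn (A.mulVec v)) := by
          have := mul_le_mul_of_nonneg_left hL1 (mul_nonneg honep hK1nn)
          linarith
      _ = 2 * (1 + ρ)^2 * K1 * σ + 2 * (1 + ρ) * τ * (K1 * S12) * nn (A.mulVec v)
            + (1 - ρ) * (τ * K2 * nn (A.mulVec v)) := by ring
      _ = 2 * (1 + ρ)^2 * K1 * σ + (3 + ρ) * τ * K2 * nn (A.mulVec v) := by rw [hK12]; ring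
      _ ≤ 2 * (1 + ρ)^2 * K1 * σ + (3 + ρ) * τ * K2 * (2 * η) := by
          have h3 : 0 ≤ (3 + ρ) * τ * K2 := by positivity
          have := mul_le_mul_of_nonneg_left hε2 h3
          linarith
      _ = 2 * (1 + ρ)^2 * K1 * σ + 2 * (3 + ρ) * τ * K2 * η := by ring
  have hgoal : lpNorm p v ≤ (2 * (1 + ρ)^2 * K1 * σ + 2 * (3 + ρ) * τ * K2 * η) / (1 - ρ) := by
    rw [le_div_iff₀ h1ρ, mul_comm]
    exact hfinal
  exact hgoal.trans (le_of_eq (by ring))
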